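/- Let α, β be homeomorphisms of a topological space X, each of order two (involutions), such that supp(α) ⊆ A ∪ α(A), supp(β) ⊆ A ∪ β(A), α(A) ⊆ B, β(A) ⊆ B \ α(A), and A ∩ B = ∅ for some subsets A, B of X. Then the commutator γ = [α, β] = αβα⁻¹β⁻¹ equals βα, and γ maps A into B, γ² maps A into B, and supp(γ) ⊆ A ∪ γ(A) ∪ γ²(A). -/

import Mathlib

def supp {X : Type*} [TopologicalSpace X] (α : X ≃ₜ X) : Set X := closure {x | α x ≠ x}

instance homeoGroup (X : Type*) [TopologicalSpace X] : Group (X ≃ₜ X) where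
  mul f g := g.trans f
  one := Homeomorph.refl X
  inv := Homeomorph.symm
  mul_assoc _ _ _ := Homeomorph.ext fun _ => rfl
  one_mul _ := Homeomorph.ext fun _ => rfl
  mul_one _ := Homeomorph.ext fun _ => rfl
  inv_mul_cancel f := Homeomorph.ext f.symm_apply_apply

open scoped commutatorElement

theorem stmt5 {X : Type*} [TopologicalSpace X] (α β : X ≃ₜ X) (A B : Set X)
    (hα2 : α * α = 1) (hβ2 : β * β = 1)
    (hsα : supp α ⊆ A ∪ α '' A) (hsβ : supp β ⊆ A ∪ β '' A)
    (hαA : α '' A ⊆ B) (hβA : β '' A ⊆ B \ α '' A)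
    (hAB : A ∩ B = ∅) (γ : X ≃ₜ X) (hγ : γ = ⁅α, β⁆) :
    γ = β * α ∧ γ '' A ⊆ B ∧ γ '' (γ '' A) ⊆ B ∧
      supp γ ⊆ A ∪ γ '' A ∪ γ '' (γ '' A) := by
  have hαα : ∀ x, α (α x) = x := fun x => DFunLike.ext_iff.mp hα2 x
  have hββ : ∀ x, β (β x) = x := fun x => DFunLike.ext_iff.mp hβ2 x
  have hnAB : ∀ x, x ∈ A → x ∉ B := fun x hx hxB =>
    Set.eq_empty_iff_forall_notMem.mp hAB x ⟨hx, hxB⟩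
  -- fixed point lemmas
  have hαfix : ∀ x, x ∉ A → x ∉ α '' A → α x = x := by
    intro x h1 h2
    by_contra h
    rcases hsα (subset_closure h) with h' | h' <;> [exact h1 h'; exact h2 h']
  have hβfix : ∀ x, x ∉ A → x ∉ β '' A → β x = x := by
    intro x h1 h2
    by_contra h
    rcases hsβ (subset_closure h) with h' | h' <;> [exact h1 h'; exact h2 h']
  have hβfixαA : ∀ x, x ∈ α '' A → β x = x := by
    intro x hx
    refine hβfix x (fun hA => hnAB x hA (hαA hx)) (fun hB => (hβA hB).2 hx)
  have hαfixβA : ∀ x, x ∈ β '' A → α x = x := by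
    intro x hx
    exact hαfix x (fun hA => hnAB x hA (hβA hx).1) (hβA hx).2
  -- the key pointwise identity: αβαβ = βα
  have key : ∀ x, α (β (α (β x))) = β (α x) := by
    intro x
    by_cases hxA : x ∈ A
    · rw [hαfixβA _ (Set.mem_image_of_mem β hxA), hββ,
        hβfixαA _ (Set.mem_image_of_mem α hxA)]
    · by_cases hxα : x ∈ α '' A
      · obtain ⟨a, ha, rfl⟩ := hxα
        rw [hβfixαA _ (Set.mem_image_of_mem α ha), hαα,
          hαfixβA _ (Set.mem_image_of_mem β ha)]
      · by_cases hxβ : x ∈ β '' A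
        · obtain ⟨b, hb, rfl⟩ := hxβ
          rw [hαfixβA _ (Set.mem_image_of_mem β hb), hββ,
            hβfixαA _ (Set.mem_image_of_mem α hb), hαα]
        · have hα1 : α x = x := hαfix x hxA hxα
          have hβ1 : β x = x := hβfix x hxA hxβ
          rw [hβ1, hα1, hβ1, hα1]
  have hαi : α⁻¹ = α := inv_eq_of_mul_eq_one_right hα2
  have hβi : β⁻¹ = β := inv_eq_of_mul_eq_one_right hβ2
  have hγeq : ∀ x, γ x = β (α x) := by
    intro x
    rw [hγ]
    show α (β (α⁻¹ (β⁻¹ x))) = β (α x)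
    rw [hαi, hβi]
    exact key x
  have h1 : γ = β * α := Homeomorph.ext fun x => hγeq x
  have hγA : ∀ x ∈ A, γ x = α x := fun x hx => by
    rw [hγeq, hβfixαA _ (Set.mem_image_of_mem α hx)]
  have himg1 : γ '' A = α '' A := Set.image_congr hγA
  have himg2 : γ '' (γ '' A) = β '' A := by
    rw [himg1, ← Set.image_comp]
    exact Set.image_congr fun a ha => by
      show γ (α a) = β a
      rw [hγeq, hαα]
  refine ⟨h1, ?_, ?_, ?_⟩
  · rw [himg1]; exact hαA
  · rw [himg2]; exact fun x hx => (hβA hx).1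
  · rw [himg2, himg1]
    have hsub : {x | γ x ≠ x} ⊆ {x | α x ≠ x} ∪ {x | β x ≠ x} := by
      intro x hx
      by_contra h
      simp only [Set.mem_union, Set.mem_setOf_eq, not_or, not_not] at h
      exact hx (by rw [hγeq, h.1, h.2])
    have hcl : supp γ ⊆ supp α ∪ supp β := by
      calc supp γ ⊆ closure ({x | α x ≠ x} ∪ {x | β x ≠ x}) := closure_mono hsub
        _ = supp α ∪ supp β := closure_union
    intro x hx
    rcases hcl hx with h | h
    · rcases hsα h with h' | h'
      · exact Or.inl (Or.inl h')
      · exact Or.inl (Or.inr h')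
    · rcases hsβ h with h' | h'
      · exact Or.inl (Or.inl h')
      · exact Or.inr h'
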